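/- arXiv:2110.13019 — 2 statements merged into one kernel-verified Lean document; each statement's English description precedes it below -/
import Mathlib

section
/- Let (W^{(λ)})_{λ∈ℕ₀} be a family of N×N discrete matrix weights satisfying strong Pearson equations, with monic orthogonal sequences (P_n^{(λ)}), squared norms H_n^{(λ)}, and matrices G_n^{(λ)} = −(n−1)(K_2^{(λ)})^* − (J_1^{(λ)})^*. Then for all n, λ ∈ ℕ₀, (n+1)·H_n^{(λ+1)} = H_{n+1}^{(λ)}·(G_{n+1}^{(λ)})^*. Consequently every matrix G_n^{(λ)} with n ≥ 1 is invertible, and for all n, λ ∈ ℕ₀: H_n^{(λ)}·(G_n^{(λ)})^*·(G_{n−1}^{(λ+1)})^* ⋯ (G_1^{(λ+n−1)})^* = n!·H_0^{(λ+n)}. -/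
open scoped BigOperators ComplexOrder
open Matrix Polynomial Filter

noncomputable section

/-- The space of `N × N` complex matrices. -/
abbrev Mat (N : ℕ) := Matrix (Fin N) (Fin N) ℂ

/-- Evaluation of a matrix polynomial at a (scalar) complex number. -/
def matEval {N : ℕ} (P : Polynomial (Mat N)) (z : ℂ) : Mat N :=
  P.eval (z • (1 : Mat N))

/-- Matrix-valued inner product associated to a discrete matrix weight:
`⟨P,Q⟩_W = ∑_{x=0}^∞ P(x) W(x) Q(x)^*`. -/
def innerW {N : ℕ} (W : ℤ → Mat N) (P Q : Polynomial (Mat N)) : Mat N :=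
  ∑' x : ℕ, matEval P x * W x * (matEval Q x)ᴴ

/-- `W : ℤ → M_N(ℂ)` is an `N × N` discrete matrix weight: positive definite on ℕ,
zero on negative integers, with entrywise absolutely convergent moments of all orders. -/
structure IsWeight {N : ℕ} (W : ℤ → Mat N) : Prop where
  posDef : ∀ x : ℕ, (W (x : ℤ)).PosDef
  neg : ∀ x : ℤ, x < 0 → W x = 0
  moments : ∀ k : ℕ, ∀ i j : Fin N, Summable fun x : ℕ => (x : ℝ) ^ k * ‖W (x : ℤ) i j‖

/-- `P` is the monic orthogonal sequence of the discrete matrix weight `W`. -/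
structure IsMOS {N : ℕ} (W : ℤ → Mat N) (P : ℕ → Polynomial (Mat N)) : Prop where
  monic : ∀ n, (P n).Monic
  deg : ∀ n, (P n).natDegree = n
  orth : ∀ m n, m ≠ n → innerW W (P m) (P n) = 0

/-- Left evaluation `Q⟦M⟧ = ∑_k M^k * A_k` of a matrix polynomial at a matrix. -/
def leftEval {N : ℕ} (Q : Polynomial (Mat N)) (M : Mat N) : Mat N :=
  Q.sum fun k a => M ^ k * a

/-- The block Vandermonde condition for an eigenvalue function `ρ`. -/
def BlockVdm {N : ℕ} (ρ : ℕ → Mat N) : Prop :=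
  ∀ x : ℕ, ∃ k : Fin (x + 1) → ℕ,
    IsUnit (Matrix.of fun p q : Fin (x + 1) × Fin N => (ρ (k p.1) ^ (q.1 : ℕ)) p.2 q.2)

/-- The backward difference operator `(G·∇)(x) = G(x) - G(x-1)`. -/
def nabla {N : ℕ} (G : ℤ → Mat N) : ℤ → Mat N := fun x => G x - G (x - 1)

section Aux

variable {N : ℕ}
lemma central_smul_one (c : ℂ) (a : Mat N) : Commute a (c • (1 : Mat N)) := by
  rw [← Algebra.algebraMap_eq_smul_one]
  exact (Algebra.commutes c a).symm

def matEvalRH (z : ℂ) : Polynomial (Mat N) →+* Mat N :=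
  eval₂RingHom' (RingHom.id _) (z • 1) (fun a => central_smul_one z a)

lemma matEval_eq (p : Polynomial (Mat N)) (z : ℂ) : matEval p z = matEvalRH z p := rfl

lemma matEval_mul (p q : Polynomial (Mat N)) (z : ℂ) :
    matEval (p * q) z = matEval p z * matEval q z := by
  simp [matEval_eq]

lemma matEval_add (p q : Polynomial (Mat N)) (z : ℂ) :
    matEval (p + q) z = matEval p z + matEval q z := by simp [matEval, eval_add]

lemma matEval_sub (p q : Polynomial (Mat N)) (z : ℂ) :
    matEval (p - q) z = matEval p z - matEval q z := by simp [matEval, eval_sub]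

lemma matEval_C (a : Mat N) (z : ℂ) : matEval (C a) z = a := by simp [matEval]

lemma matEval_X (z : ℂ) : matEval (X : Polynomial (Mat N)) z = z • (1 : Mat N) := by simp [matEval]

lemma matEval_sum {ι : Type*} (s : Finset ι) (f : ι → Polynomial (Mat N)) (z : ℂ) :
    matEval (∑ i ∈ s, f i) z = ∑ i ∈ s, matEval (f i) z := by
  simp [matEval, eval_finset_sum]

def shiftP (c : ℂ) : Polynomial (Mat N) →+* Polynomial (Mat N) :=
  eval₂RingHom' C (X + C (c • 1))
    (fun a => (commute_X (C a)).symm.add_right ((central_smul_one c a).map (C : Mat N →+* Polynomial (Mat N))))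

lemma shiftP_C (c : ℂ) (a : Mat N) : shiftP c (C a) = C a := eval₂_C _ _

lemma shiftP_X (c : ℂ) : shiftP c (X : Polynomial (Mat N)) = X + C (c • 1) := eval₂_X _ _

lemma matEval_shiftP (c : ℂ) (p : Polynomial (Mat N)) (z : ℂ) :
    matEval (shiftP c p) z = matEval p (z + c) := by
  have : (matEvalRH z).comp (shiftP c) = (matEvalRH (z + c) : Polynomial (Mat N) →+* Mat N) := by
    apply Polynomial.ringHom_ext
    · intro a
      simp [← matEval_eq, shiftP_C, matEval_C]
    · simp [← matEval_eq, shiftP_X, matEval_add, matEval_X, matEval_C, add_smul]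
  rw [matEval_eq, matEval_eq, ← this]
  rfl

lemma shiftP_shiftP (c d : ℂ) (p : Polynomial (Mat N)) :
    shiftP c (shiftP d p) = shiftP (c + d) p := by
  have : (shiftP c).comp (shiftP d) = (shiftP (c + d) : Polynomial (Mat N) →+* _) := by
    apply Polynomial.ringHom_ext
    · intro a; simp [shiftP_C]
    · simp only [RingHom.comp_apply, map_add, shiftP_X, shiftP_C, add_smul]
      rw [add_assoc]
  exact DFunLike.congr_fun this p

lemma shiftP_zero (p : Polynomial (Mat N)) : shiftP 0 p = p := by
  have : (shiftP 0 : Polynomial (Mat N) →+* _) = RingHom.id _ := by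
    apply Polynomial.ringHom_ext
    · intro a; simp [shiftP_C]
    · simp [shiftP_X]
  rw [this]; rfl

lemma natDegree_shiftP_le (c : ℂ) (p : Polynomial (Mat N)) :
    (shiftP c p).natDegree ≤ p.natDegree := by
  have h : shiftP c p = p.comp (X + C (c • (1 : Mat N))) := rfl
  rw [h]
  calc (p.comp (X + C (c • (1 : Mat N)))).natDegree
      ≤ p.natDegree * (X + C (c • (1 : Mat N))).natDegree := natDegree_comp_le
    _ ≤ p.natDegree * 1 :=
        Nat.mul_le_mul_left _ ((natDegree_add_le _ _).trans (max_le natDegree_X_le (by simp)))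
    _ = p.natDegree := mul_one _

lemma coeff_X_add_smul_one_pow (c : ℂ) (i k : ℕ) :
    (((X : Polynomial (Mat N)) + C (c • 1)) ^ i).coeff k
      = (c ^ (i - k) * (i.choose k : ℂ)) • (1 : Mat N) := by
  have h : ((X : Polynomial (Mat N)) + C (c • 1))
      = Polynomial.map (algebraMap ℂ (Mat N)) (X + C c) := by
    simp [Polynomial.map_add, Algebra.algebraMap_eq_smul_one]
  rw [h, ← Polynomial.map_pow, Polynomial.coeff_map, coeff_X_add_C_pow,
    Algebra.algebraMap_eq_smul_one]
lemma coeff_shiftP (c : ℂ) (p : Polynomial (Mat N)) (n : ℕ) (hp : p.natDegree ≤ n + 1) :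
    (shiftP c p).coeff n
      = p.coeff n + (c * ((n + 1 : ℕ) : ℂ)) • p.coeff (n + 1) := by
  have hrepr : shiftP c p = Polynomial.eval₂ C (X + C (c • (1 : Mat N))) p := rfl
  rw [hrepr, eval₂_eq_sum_range]
  rw [Polynomial.finset_sum_coeff]
  have hterm : ∀ i : ℕ, (C (p.coeff i) * (X + C (c • (1 : Mat N))) ^ i).coeff n
      = (c ^ (i - n) * (i.choose n : ℂ)) • p.coeff i := by
    intro i
    rw [coeff_C_mul, coeff_X_add_smul_one_pow, mul_smul_comm, mul_one]
  simp only [hterm]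
  rw [Finset.sum_subset (Finset.range_subset_range.2 (by omega : p.natDegree + 1 ≤ n + 2))
    (by
      intro i _ hi
      rw [Finset.mem_range, not_lt] at hi
      rw [coeff_eq_zero_of_natDegree_lt (by omega), smul_zero])]
  rw [Finset.sum_range_succ, Finset.sum_range_succ]
  rw [Finset.sum_eq_zero (by
    intro i hi
    rw [Finset.mem_range] at hi
    rw [Nat.choose_eq_zero_of_lt hi]
    simp)]
  simp [Nat.choose_succ_self_right]
lemma matEval_entry_eq (p : Polynomial (Mat N)) (x : ℂ) (r s : Fin N) :
    (matEval p x) r s = ∑ i ∈ Finset.range (p.natDegree + 1), x ^ i * (p.coeff i) r s := by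
  rw [matEval, eval_eq_sum_range]
  rw [Matrix.sum_apply]
  congr 1
  ext i
  rw [_root_.smul_pow, one_pow, mul_smul_comm, mul_one, Matrix.smul_apply, smul_eq_mul]

lemma matEval_entry_bound (p : Polynomial (Mat N)) (r s : Fin N) :
    ∃ Cb : ℝ, 0 ≤ Cb ∧ ∀ x : ℕ, ‖(matEval p x) r s‖ ≤ Cb * ((x : ℝ) + 1) ^ p.natDegree := by
  refine ⟨∑ i ∈ Finset.range (p.natDegree + 1), ‖(p.coeff i) r s‖,
    Finset.sum_nonneg fun _ _ => norm_nonneg _, fun x => ?_⟩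
  rw [matEval_entry_eq]
  refine (norm_sum_le _ _).trans ?_
  rw [Finset.sum_mul]
  apply Finset.sum_le_sum
  intro i hi
  rw [Finset.mem_range] at hi
  rw [norm_mul, norm_pow, Complex.norm_natCast, mul_comm]
  apply mul_le_mul_of_nonneg_left _ (norm_nonneg _)
  calc (x : ℝ) ^ i ≤ ((x : ℝ) + 1) ^ i := by
        apply pow_le_pow_left₀ (Nat.cast_nonneg x) (by linarith)
    _ ≤ ((x : ℝ) + 1) ^ p.natDegree := by
        apply pow_le_pow_right₀ (by linarith [(Nat.cast_nonneg (α := ℝ) x)]) (by omega)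

lemma summable_weight_poly {W : ℤ → Mat N} (hW : IsWeight W) (m : ℕ) (a b : Fin N) :
    Summable fun x : ℕ => ((x : ℝ) + 1) ^ m * ‖W (x : ℤ) a b‖ := by
  have h : ∀ x : ℕ, ((x : ℝ) + 1) ^ m * ‖W (x : ℤ) a b‖
      = ∑ j ∈ Finset.range (m + 1), (m.choose j : ℝ) * ((x : ℝ) ^ j * ‖W (x : ℤ) a b‖) := by
    intro x
    rw [add_pow, Finset.sum_mul]
    congr 1; ext j; ring
  simp only [h]
  apply summable_sum
  intro j _
  exact (hW.moments j a b).mul_left _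

lemma summable_inner {W : ℤ → Mat N} (hW : IsWeight W) (p q : Polynomial (Mat N)) :
    Summable fun x : ℕ => matEval p x * W x * (matEval q x)ᴴ := by
  refine Pi.summable.2 ?_; intro i
  rw [Pi.summable]; intro j
  have hentry : ∀ x : ℕ, (matEval p x * W x * (matEval q x)ᴴ) i j
      = ∑ b : Fin N, ∑ a : Fin N,
          (matEval p x) i a * W (x : ℤ) a b * star ((matEval q x) j b) := by
    intro x
    rw [Matrix.mul_apply]
    congr 1; ext b
    rw [Matrix.mul_apply, Finset.sum_mul]
    rfl
  simp only [hentry]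
  apply summable_sum; intro b _
  apply summable_sum; intro a _
  obtain ⟨Cp, hCp0, hCp⟩ := matEval_entry_bound p i a
  obtain ⟨Cq, hCq0, hCq⟩ := matEval_entry_bound q j b
  apply Summable.of_norm_bounded
    (g := fun x : ℕ => (Cp * Cq) * (((x : ℝ) + 1) ^ (p.natDegree + q.natDegree) * ‖W (x : ℤ) a b‖))
    (((summable_weight_poly hW (p.natDegree + q.natDegree) a b).mul_left _))
  intro x
  rw [norm_mul, norm_mul, norm_star]
  have h1 := hCp x
  have h2 := hCq x
  have hx1 : (0:ℝ) ≤ ((x : ℝ) + 1) ^ p.natDegree := by positivity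
  calc ‖(matEval p ↑x) i a‖ * ‖W (x:ℤ) a b‖ * ‖(matEval q ↑x) j b‖
      ≤ (Cp * ((x : ℝ) + 1) ^ p.natDegree) * ‖W (x:ℤ) a b‖ * (Cq * ((x : ℝ) + 1) ^ q.natDegree) := by
        apply mul_le_mul
        · exact mul_le_mul_of_nonneg_right h1 (norm_nonneg _)
        · exact h2
        · exact norm_nonneg _
        · positivity
    _ = (Cp * Cq) * (((x : ℝ) + 1) ^ (p.natDegree + q.natDegree) * ‖W (x : ℤ) a b‖) := by
        rw [pow_add]; ring
variable {W : ℤ → Mat N}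

lemma innerW_sub_right (hW : IsWeight W) (p q₁ q₂ : Polynomial (Mat N)) :
    innerW W p (q₁ - q₂) = innerW W p q₁ - innerW W p q₂ := by
  unfold innerW
  rw [← Summable.tsum_sub (summable_inner hW p q₁) (summable_inner hW p q₂)]
  congr 1; ext x
  rw [matEval_sub, conjTranspose_sub, mul_sub]

lemma innerW_Cmul_right (hW : IsWeight W) (p q : Polynomial (Mat N)) (a : Mat N) :
    innerW W p (C a * q) = innerW W p q * aᴴ := by
  unfold innerW
  have h : ∀ x : ℕ, matEval p x * W x * (matEval (C a * q) x)ᴴ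
      = matEval p x * W x * (matEval q x)ᴴ * aᴴ := by
    intro x
    simp only [matEval_mul, matEval_C, conjTranspose_mul, mul_assoc]
  simp only [h]
  exact (summable_inner hW p q).tsum_mul_right _

lemma innerW_Cmul_left (hW : IsWeight W) (p q : Polynomial (Mat N)) (a : Mat N) :
    innerW W (C a * p) q = a * innerW W p q := by
  unfold innerW
  have h : ∀ x : ℕ, matEval (C a * p) x * W x * (matEval q x)ᴴ
      = a * (matEval p x * W x * (matEval q x)ᴴ) := by
    intro x
    simp only [matEval_mul, matEval_C, mul_assoc]
  simp only [h]
  exact (summable_inner hW p q).tsum_mul_left _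

lemma innerW_sum_right {ι : Type*} (hW : IsWeight W) (p : Polynomial (Mat N)) (s : Finset ι)
    (f : ι → Polynomial (Mat N)) :
    innerW W p (∑ k ∈ s, f k) = ∑ k ∈ s, innerW W p (f k) := by
  unfold innerW
  have h : ∀ x : ℕ, matEval p x * W x * (matEval (∑ k ∈ s, f k) x)ᴴ
      = ∑ k ∈ s, matEval p x * W x * (matEval (f k) x)ᴴ := by
    intro x
    rw [matEval_sum, conjTranspose_sum, Finset.mul_sum]
  simp only [h]
  exact Summable.tsum_finsetSum fun i _ => summable_inner hW p (f i)

lemma innerW_sum_left {ι : Type*} (hW : IsWeight W) (q : Polynomial (Mat N)) (s : Finset ι)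
    (f : ι → Polynomial (Mat N)) :
    innerW W (∑ k ∈ s, f k) q = ∑ k ∈ s, innerW W (f k) q := by
  unfold innerW
  have h : ∀ x : ℕ, matEval (∑ k ∈ s, f k) x * W x * (matEval q x)ᴴ
      = ∑ k ∈ s, matEval (f k) x * W x * (matEval q x)ᴴ := by
    intro x
    rw [matEval_sum, Finset.sum_mul, Finset.sum_mul]
  simp only [h]
  exact Summable.tsum_finsetSum fun i _ => summable_inner hW (f i) q

lemma exists_expansion (P : ℕ → Polynomial (Mat N)) (hm : ∀ k, (P k).Monic)
    (hd : ∀ k, (P k).natDegree = k) :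
    ∀ m (r : Polynomial (Mat N)), r.natDegree ≤ m →
      ∃ c : ℕ → Mat N, c m = r.coeff m ∧ r = ∑ k ∈ Finset.range (m + 1), C (c k) * P k := by
  intro m
  induction m with
  | zero =>
      intro r hr
      refine ⟨fun _ => r.coeff 0, rfl, ?_⟩
      have hP0 : P 0 = 1 := (hm 0).natDegree_eq_zero.1 (hd 0)
      rw [Finset.sum_range_one, hP0, mul_one]
      exact r.eq_C_of_natDegree_le_zero hr
  | succ m ih =>
      intro r hr
      have hdeg : (r - C (r.coeff (m + 1)) * P (m + 1)).natDegree ≤ m := by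
        rw [natDegree_le_iff_coeff_eq_zero]
        intro j hj
        rw [coeff_sub, coeff_C_mul]
        rcases eq_or_lt_of_le (Nat.succ_le_of_lt hj) with hje | hjl
        · rw [← hje]
          have : (P (m + 1)).coeff (m + 1) = 1 := by
            have := (hm (m + 1)).coeff_natDegree
            rwa [hd (m + 1)] at this
          rw [this, mul_one, sub_self]
        · have e1 : r.coeff j = 0 := coeff_eq_zero_of_natDegree_lt (lt_of_le_of_lt hr hjl)
          have e2 : (P (m + 1)).coeff j = 0 :=
            coeff_eq_zero_of_natDegree_lt (by rw [hd (m + 1)]; exact hjl)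
          rw [e1, e2, mul_zero, sub_zero]
      obtain ⟨c, hc, hsum⟩ := ih _ hdeg
      refine ⟨Function.update c (m + 1) (r.coeff (m + 1)), Function.update_self _ _ _, ?_⟩
      rw [Finset.sum_range_succ]
      have hcongr : ∑ k ∈ Finset.range (m + 1),
          C (Function.update c (m + 1) (r.coeff (m + 1)) k) * P k
          = ∑ k ∈ Finset.range (m + 1), C (c k) * P k := by
        apply Finset.sum_congr rfl
        intro k hk
        rw [Finset.mem_range] at hk
        rw [Function.update_of_ne (by omega)]
      rw [hcongr, Function.update_self, ← hsum, sub_add_cancel]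

lemma innerW_right_of_deg_le (hW : IsWeight W) {P : ℕ → Polynomial (Mat N)} (hP : IsMOS W P) (n : ℕ)
    (r : Polynomial (Mat N)) (hr : r.natDegree ≤ n) :
    innerW W (P n) r = innerW W (P n) (P n) * (r.coeff n)ᴴ := by
  obtain ⟨c, hc, hrepr⟩ := exists_expansion P hP.monic hP.deg n r hr
  conv_lhs => rw [hrepr]
  rw [innerW_sum_right hW]
  rw [Finset.sum_eq_single n]
  · rw [innerW_Cmul_right hW, hc]
  · intro k _ hk
    rw [innerW_Cmul_right hW, hP.orth n k (Ne.symm hk), zero_mul]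
  · intro h
    exact absurd (Finset.self_mem_range_succ n) h

lemma innerW_left_of_deg_le (hW : IsWeight W) {P : ℕ → Polynomial (Mat N)} (hP : IsMOS W P) (n : ℕ)
    (r : Polynomial (Mat N)) (hr : r.natDegree ≤ n) :
    innerW W r (P n) = r.coeff n * innerW W (P n) (P n) := by
  obtain ⟨c, hc, hrepr⟩ := exists_expansion P hP.monic hP.deg n r hr
  conv_lhs => rw [hrepr]
  rw [innerW_sum_left hW]
  rw [Finset.sum_eq_single n]
  · rw [innerW_Cmul_left hW, hc]
  · intro k _ hk
    rw [innerW_Cmul_left hW, hP.orth k n hk, mul_zero]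
  · intro h
    exact absurd (Finset.self_mem_range_succ n) h
lemma exists_nonzero_eval {p : Polynomial (Mat N)} {n : ℕ} (hmon : p.Monic)
    (hdeg : p.natDegree = n) {v : Fin N → ℂ} (hv : v ≠ 0) :
    ∃ x : ℕ, (matEval p x)ᴴ *ᵥ v ≠ 0 := by
  obtain ⟨a, ha⟩ := Function.ne_iff.1 hv
  set g : Polynomial ℂ :=
    ∑ k ∈ Finset.range (n + 1), C (∑ b, star ((p.coeff k) b a) * v b) * X ^ k with hg
  have hcoe : g.coeff n = v a := by
    rw [hg, finset_sum_coeff]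
    rw [Finset.sum_eq_single n]
    · rw [coeff_C_mul, coeff_X_pow, if_pos rfl, mul_one]
      have h1 : p.coeff n = 1 := by
        have := hmon.coeff_natDegree; rwa [hdeg] at this
      rw [h1]
      rw [Finset.sum_eq_single a]
      · simp [Matrix.one_apply]
      · intro b _ hb; simp [Matrix.one_apply, hb]
      · simp
    · intro k _ hk
      rw [coeff_C_mul, coeff_X_pow, if_neg (Ne.symm hk), mul_zero]
    · intro h; exact absurd (Finset.self_mem_range_succ n) h
  have heval : ∀ x : ℕ, g.eval (x : ℂ) = ((matEval p x)ᴴ *ᵥ v) a := by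
    intro x
    rw [hg, eval_finset_sum]
    have hlhs : ∀ k, (C (∑ b, star ((p.coeff k) b a) * v b) * X ^ k).eval (x:ℂ)
        = ∑ b, (x:ℂ) ^ k * (star ((p.coeff k) b a) * v b) := by
      intro k
      rw [eval_mul, eval_C, eval_pow, eval_X, Finset.sum_mul]
      congr 1; ext b; ring
    simp only [hlhs]
    rw [Matrix.mulVec, Finset.sum_comm]
    congr 1; ext b
    show _ = (matEval p ↑x)ᴴ a b * v b
    rw [Matrix.conjTranspose_apply, matEval_entry_eq p (x:ℂ) b a, hdeg]
    rw [star_sum, Finset.sum_mul]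
    congr 1; ext k
    rw [star_mul', star_pow, Complex.star_def, Complex.conj_natCast]
    ring
  by_contra hno
  push_neg at hno
  have hall : ∀ x : ℕ, g.eval (x : ℂ) = 0 := by
    intro x; rw [heval x, hno x]; rfl
  have hg0 : g = 0 := by
    apply Polynomial.eq_zero_of_infinite_isRoot
    apply Set.Infinite.mono (s := Set.range (fun x : ℕ => (x : ℂ)))
    · rintro z ⟨x, rfl⟩; exact hall x
    · exact Set.infinite_range_of_injective Nat.cast_injective
  rw [hg0] at hcoe
  exact ha (by simpa using hcoe.symm)

lemma isUnit_innerW_self {W : ℤ → Mat N} (hW : IsWeight W) {P : ℕ → Polynomial (Mat N)}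
    (hP : IsMOS W P) (n : ℕ) : IsUnit (innerW W (P n) (P n)) := by
  set p := P n with hp
  set f : ℕ → Mat N := fun x => matEval p x * W x * (matEval p x)ᴴ with hf
  have hsum : Summable f := summable_inner hW p p
  rw [Matrix.isUnit_iff_isUnit_det, isUnit_iff_ne_zero]
  intro hdet
  obtain ⟨v, hv, hmv⟩ := Matrix.exists_mulVec_eq_zero_iff.2 hdet
  let L : Mat N →ₗ[ℂ] ℂ :=
    { toFun := fun M => dotProduct (star v) (M *ᵥ v)
      map_add' := fun M1 M2 => by simp [Matrix.add_mulVec, dotProduct_add]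
      map_smul' := fun c M => by simp [Matrix.smul_mulVec, dotProduct_smul] }
  have hLcont : Continuous L := L.continuous_of_finiteDimensional
  have hqsum : Summable (fun x : ℕ => L (f x)) := hsum.map L hLcont
  have hLsum : L (innerW W p p) = ∑' x : ℕ, L (f x) :=
    ((hsum.hasSum.map L hLcont).tsum_eq).symm
  have hterm : ∀ x : ℕ, L (f x)
      = dotProduct (star ((matEval p x)ᴴ *ᵥ v)) (W x *ᵥ ((matEval p x)ᴴ *ᵥ v)) := by
    intro x
    show dotProduct (star v) ((matEval p x * W x * (matEval p x)ᴴ) *ᵥ v) = _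
    rw [← Matrix.mulVec_mulVec, ← Matrix.mulVec_mulVec]
    rw [Matrix.dotProduct_mulVec (star v)]
    congr 1
    rw [Matrix.star_mulVec, Matrix.conjTranspose_conjTranspose]
  have hnn : ∀ x : ℕ, 0 ≤ L (f x) := by
    intro x
    rw [hterm x]
    exact (hW.posDef x).posSemidef.dotProduct_mulVec_nonneg _
  obtain ⟨x₀, hx₀⟩ := exists_nonzero_eval (hP.monic n) (hP.deg n) hv
  have hpos : 0 < L (f x₀) := by
    rw [hterm x₀]
    exact (hW.posDef x₀).dotProduct_mulVec_pos hx₀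
  have hresum : Summable (fun x : ℕ => (L (f x)).re) :=
    (Complex.hasSum_re hqsum.hasSum).summable
  have hlt : (0:ℝ) < (L (innerW W p p)).re := by
    rw [hLsum, Complex.re_tsum hqsum]
    have h1 : (0:ℝ) < (L (f x₀)).re := (Complex.lt_def.mp hpos).1
    refine lt_of_lt_of_le h1 (Summable.le_tsum hresum x₀ ?_)
    intro j _
    exact (Complex.le_def.mp (hnn j)).1
  have hzero : L (innerW W p p) = 0 := by
    show dotProduct (star v) (innerW W p p *ᵥ v) = 0
    rw [hmv, dotProduct_zero]
  rw [hzero] at hlt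
  simp at hlt
lemma master {W W' : ℤ → Mat N} (hW' : IsWeight W') (J1 J0 : Mat N)
    (h2 : ∀ x : ℤ, W' x - W' (x - 1) = W x * ((x : ℂ) • J1 + J0))
    (p q : Polynomial (Mat N)) :
    innerW W p (q * (C J1ᴴ * X + C J0ᴴ))
      = innerW W' p q - innerW W' (shiftP 1 p) (shiftP 1 q) := by
  have hψ : ∀ x : ℕ, (matEval (q * (C J1ᴴ * X + C J0ᴴ)) x)ᴴ
      = ((x : ℂ) • J1 + J0) * (matEval q x)ᴴ := by
    intro x
    rw [matEval_mul, conjTranspose_mul]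
    congr 1
    rw [matEval_add, matEval_mul, matEval_C, matEval_C, matEval_X]
    rw [conjTranspose_add, conjTranspose_mul]
    rw [Matrix.conjTranspose_smul, conjTranspose_one, Matrix.conjTranspose_conjTranspose,
      Matrix.conjTranspose_conjTranspose]
    simp [Matrix.smul_mul]
  set g : ℕ → Mat N := fun x => matEval p x * W' ((x : ℤ) - 1) * (matEval q x)ᴴ with hg
  have hgshift : ∀ x : ℕ, g (x + 1)
      = matEval (shiftP 1 p) x * W' x * (matEval (shiftP 1 q) x)ᴴ := by
    intro x
    rw [hg]
    simp only []
    rw [matEval_shiftP, matEval_shiftP]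
    have h1 : (((x + 1 : ℕ) : ℤ) - 1) = (x : ℤ) := by push_cast; ring
    have h2 : (((x + 1 : ℕ)) : ℂ) = (x : ℂ) + 1 := by push_cast; ring
    rw [h1, h2]
  have hgsum : Summable g := by
    apply (summable_nat_add_iff 1).mp
    have : (fun x : ℕ => g (x + 1))
        = fun x : ℕ => matEval (shiftP 1 p) x * W' x * (matEval (shiftP 1 q) x)ᴴ :=
      funext hgshift
    rw [this]
    exact summable_inner hW' _ _
  have hterm : ∀ x : ℕ, matEval p x * W x * (matEval (q * (C J1ᴴ * X + C J0ᴴ)) x)ᴴ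
      = matEval p x * W' x * (matEval q x)ᴴ - g x := by
    intro x
    rw [hψ x]
    have h2x := h2 (x : ℤ)
    have hcast : (((x : ℤ)) : ℂ) = (x : ℂ) := by push_cast; ring
    rw [hcast] at h2x
    rw [hg]
    simp only []
    rw [← mul_assoc, mul_assoc (matEval p ((x:ℕ):ℂ)) (W ((x:ℕ):ℤ)) (((x:ℕ):ℂ) • J1 + J0),
      ← h2x, mul_sub, sub_mul]
  have hS1 := summable_inner (W := W') hW' p q
  unfold innerW
  calc ∑' x : ℕ, matEval p x * W x * (matEval (q * (C J1ᴴ * X + C J0ᴴ)) x)ᴴ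
      = ∑' x : ℕ, (matEval p x * W' x * (matEval q x)ᴴ - g x) := by
        congr 1; funext x; exact hterm x
    _ = (∑' x : ℕ, matEval p x * W' x * (matEval q x)ᴴ) - ∑' x, g x :=
        Summable.tsum_sub hS1 hgsum
    _ = (∑' x : ℕ, matEval p x * W' x * (matEval q x)ᴴ)
          - ∑' x : ℕ, matEval (shiftP 1 p) x * W' x * (matEval (shiftP 1 q) x)ᴴ := by
        congr 1
        rw [Summable.tsum_eq_zero_add hgsum]
        have hg0 : g 0 = 0 := by
          rw [hg]
          simp only []
          have : W' (((0 : ℕ) : ℤ) - 1) = 0 := hW'.neg _ (by norm_num)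
          rw [this, mul_zero, zero_mul]
        rw [hg0, zero_add]
        congr 1; funext x; exact hgshift x
lemma innerW_zero_right (W : ℤ → Mat N) (p : Polynomial (Mat N)) :
    innerW W p 0 = 0 := by
  unfold innerW
  have : ∀ x : ℕ, matEval p x * W x * (matEval (0 : Polynomial (Mat N)) x)ᴴ = 0 := by
    intro x
    have h0 : matEval (0 : Polynomial (Mat N)) (x : ℂ) = 0 := by simp [matEval]
    rw [h0, conjTranspose_zero, mul_zero]
  simp only [this, tsum_zero]

lemma innerW_convert {W W' : ℤ → Mat N} (K2 K1 K0 : Mat N)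
    (h1 : ∀ x : ℤ, W' x = W x * ((x : ℂ) ^ 2 • K2 + (x : ℂ) • K1 + K0))
    (p r : Polynomial (Mat N)) :
    innerW W' p r = innerW W p (r * (C K2ᴴ * X ^ 2 + C K1ᴴ * X + C K0ᴴ)) := by
  unfold innerW
  congr 1; funext x
  have hφ : (matEval (r * (C K2ᴴ * X ^ 2 + C K1ᴴ * X + C K0ᴴ)) x)ᴴ
      = ((x : ℂ) ^ 2 • K2 + (x : ℂ) • K1 + K0) * (matEval r x)ᴴ := by
    rw [matEval_mul, conjTranspose_mul]
    congr 1
    have hx2 : matEval ((X : Polynomial (Mat N)) ^ 2) (x : ℂ) = ((x : ℂ) ^ 2) • 1 := by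
      rw [pow_two, matEval_mul, matEval_X, smul_mul_smul_comm, one_mul, ← pow_two]
    rw [matEval_add, matEval_add, matEval_mul, matEval_mul, matEval_C, matEval_C, matEval_C,
      matEval_X, hx2]
    rw [conjTranspose_add, conjTranspose_add, conjTranspose_mul, conjTranspose_mul]
    rw [Matrix.conjTranspose_smul, Matrix.conjTranspose_smul, conjTranspose_one]
    simp [Matrix.smul_mul, Matrix.mul_smul]
  rw [hφ]
  have h1x := h1 (x : ℤ)
  have hcast : (((x:ℕ) : ℤ) : ℂ) = ((x:ℕ) : ℂ) := by push_cast; ring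
  rw [hcast] at h1x
  rw [h1x]
  rw [mul_assoc, mul_assoc, mul_assoc]

lemma coeff_mul_linear (q : Polynomial (Mat N)) (A B : Mat N) (n : ℕ)
    (hq : q.natDegree ≤ n) :
    (q * (C A * X + C B)).coeff (n + 1) = q.coeff n * A
      ∧ (q * (C A * X + C B)).natDegree ≤ n + 1 := by
  constructor
  · rw [mul_add, coeff_add, ← mul_assoc, coeff_mul_X, coeff_mul_C, coeff_mul_C,
      coeff_eq_zero_of_natDegree_lt (lt_of_le_of_lt hq (Nat.lt_succ_self n)), zero_mul, add_zero]
  · refine (natDegree_mul_le).trans ?_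
    have : (C A * X + C B).natDegree ≤ 1 := by
      refine (natDegree_add_le _ _).trans (max_le ?_ (by simp))
      refine (natDegree_mul_le).trans ?_
      simp [natDegree_X_le]
    omega

lemma coeff_mul_quadratic (s : Polynomial (Mat N)) (A B D : Mat N) (n : ℕ)
    (hs : s.natDegree ≤ n) :
    (s * (C A * X ^ 2 + C B * X + C D)).coeff (n + 2) = s.coeff n * A
      ∧ (s * (C A * X ^ 2 + C B * X + C D)).natDegree ≤ n + 2 := by
  constructor
  · rw [mul_add, mul_add, coeff_add, coeff_add]
    have e3 : (s * C D).coeff (n + 2) = 0 := by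
      rw [coeff_mul_C, coeff_eq_zero_of_natDegree_lt (lt_of_le_of_lt hs (by omega)), zero_mul]
    have e2 : (s * (C B * X)).coeff (n + 2) = 0 := by
      rw [← mul_assoc, coeff_mul_X, coeff_mul_C,
        coeff_eq_zero_of_natDegree_lt (lt_of_le_of_lt hs (by omega)), zero_mul]
    have e1 : (s * (C A * X ^ 2)).coeff (n + 2) = s.coeff n * A := by
      rw [pow_two, ← mul_assoc, ← mul_assoc, coeff_mul_X, coeff_mul_X, coeff_mul_C]
    rw [e1, e2, e3, add_zero, add_zero]
  · refine (natDegree_mul_le).trans ?_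
    have : (C A * X ^ 2 + C B * X + C D).natDegree ≤ 2 := by
      refine (natDegree_add_le _ _).trans (max_le ((natDegree_add_le _ _).trans (max_le ?_ ?_)) (by simp))
      · refine (natDegree_mul_le).trans ?_
        have : ((X : Polynomial (Mat N)) ^ 2).natDegree ≤ 2 :=
          (natDegree_pow_le).trans (by simp [natDegree_X_le])
        simp only [natDegree_C, zero_add]
        exact this
      · refine (natDegree_mul_le).trans ?_
        simp only [natDegree_C, zero_add]
        exact natDegree_X_le.trans (by omega)
    omega

lemma innerW_sub_left {W : ℤ → Mat N} (hW : IsWeight W) (p₁ p₂ q : Polynomial (Mat N)) :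
    innerW W (p₁ - p₂) q = innerW W p₁ q - innerW W p₂ q := by
  unfold innerW
  rw [← Summable.tsum_sub (summable_inner hW p₁ q) (summable_inner hW p₂ q)]
  congr 1; ext x
  rw [matEval_sub, sub_mul, sub_mul]

lemma part1_core (W : ℕ → ℤ → Mat N) (hW : ∀ lam, IsWeight (W lam))
    (K2 J1 J0 : ℕ → Mat N)
    (h2 : ∀ lam : ℕ, ∀ x : ℤ,
      W (lam + 1) x - W (lam + 1) (x - 1) = W lam x * ((x : ℂ) • J1 lam + J0 lam))
    (P : ℕ → ℕ → Polynomial (Mat N)) (hP : ∀ lam, IsMOS (W lam) (P lam))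
    (n lam : ℕ)
    (hT2 : innerW (W (lam + 1)) (P lam (n + 1)) (P (lam + 1) n - shiftP (-1) (P (lam + 1) n))
      = ((n : ℕ) : ℂ) • (innerW (W lam) (P lam (n + 1)) (P lam (n + 1)) * K2 lam)) :
    ((n : ℂ) + 1) • innerW (W (lam + 1)) (P (lam + 1) n) (P (lam + 1) n)
      = innerW (W lam) (P lam (n + 1)) (P lam (n + 1))
          * (-((n : ℂ) • K2 lam) - J1 lam) := by
  have hWl := hW lam
  have hWl' := hW (lam + 1)
  set p := P lam (n + 1) with hpdef
  set Q := P (lam + 1) n with hQdef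
  set q : Polynomial (Mat N) := shiftP (-1) Q with hqdef
  have hq1 : shiftP 1 q = Q := by
    rw [hqdef, shiftP_shiftP]
    have h0 : (1 : ℂ) + -1 = 0 := by ring
    rw [h0, shiftP_zero]
  have hdp' : p.natDegree = n + 1 := (hP lam).deg (n + 1)
  have hdQ : Q.natDegree = n := (hP (lam + 1)).deg n
  have hQtop : Q.coeff n = 1 := by
    have h := ((hP (lam + 1)).monic n).coeff_natDegree; rwa [hdQ] at h
  have hptop : p.coeff (n + 1) = 1 := by
    have h := ((hP lam).monic (n + 1)).coeff_natDegree; rwa [hdp'] at h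
  have hQ1 : Q.coeff (n + 1) = 0 := coeff_eq_zero_of_natDegree_lt (by omega)
  have hqn : q.coeff n = 1 := by
    rw [hqdef, coeff_shiftP (-1) Q n (by omega), hQ1, smul_zero, add_zero, hQtop]
  have hqdeg : q.natDegree ≤ n := (natDegree_shiftP_le _ _).trans (le_of_eq hdQ)
  -- the difference polynomial Δp
  set dp : Polynomial (Mat N) := shiftP 1 p - p with hdpdef
  have hdpc : dp.coeff n = ((n + 1 : ℕ) : ℂ) • (1 : Mat N) := by
    rw [hdpdef, coeff_sub, coeff_shiftP 1 p n (by omega), hptop, one_mul,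
      add_sub_cancel_left]
  have hdpdeg : dp.natDegree ≤ n := by
    rw [natDegree_le_iff_coeff_eq_zero]
    intro j hj
    rw [hdpdef, coeff_sub]
    rcases eq_or_lt_of_le (Nat.succ_le_of_lt hj) with hje | hjl
    · rw [← hje]
      have hp2 : p.coeff (n + 1 + 1) = 0 := coeff_eq_zero_of_natDegree_lt (by omega)
      rw [coeff_shiftP 1 p (n + 1) (by omega), hp2, smul_zero, add_zero, sub_self]
    · have e1 : (shiftP 1 p).coeff j = 0 :=
        coeff_eq_zero_of_natDegree_lt (lt_of_le_of_lt (natDegree_shiftP_le 1 p) (by omega))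
      have e2 : p.coeff j = 0 := coeff_eq_zero_of_natDegree_lt (by omega)
      rw [e1, e2, sub_zero]
  -- T1
  have hT1 : innerW (W (lam + 1)) dp Q = ((n + 1 : ℕ) : ℂ) • innerW (W (lam + 1)) Q Q := by
    rw [innerW_left_of_deg_le hWl' (hP (lam + 1)) n dp hdpdeg, hdpc, smul_mul_assoc, one_mul]
  -- T3
  have hco := coeff_mul_linear q (J1 lam)ᴴ (J0 lam)ᴴ n hqdeg
  have hT3 : innerW (W lam) p (q * (C (J1 lam)ᴴ * X + C (J0 lam)ᴴ))
      = innerW (W lam) p p * J1 lam := by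
    rw [innerW_right_of_deg_le hWl (hP lam) (n + 1) _ hco.2, hco.1, hqn, one_mul,
      Matrix.conjTranspose_conjTranspose]
  -- master identity
  have hm := master hWl' (J1 lam) (J0 lam) (h2 lam) p q
  rw [hq1] at hm
  have hsubL : innerW (W (lam + 1)) dp Q
      = innerW (W (lam + 1)) (shiftP 1 p) Q - innerW (W (lam + 1)) p Q :=
    innerW_sub_left hWl' (shiftP 1 p) p Q
  have hsubR : innerW (W (lam + 1)) p (Q - q)
      = innerW (W (lam + 1)) p Q - innerW (W (lam + 1)) p q :=
    innerW_sub_right hWl' p Q q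
  have hzero : ((n + 1 : ℕ) : ℂ) • innerW (W (lam + 1)) Q Q
      + ((n : ℕ) : ℂ) • (innerW (W lam) p p * K2 lam)
      + innerW (W lam) p p * J1 lam = 0 := by
    rw [← hT1, ← hT2, ← hT3, hsubL, hsubR, hm]
    abel
  have hcast : ((n + 1 : ℕ) : ℂ) = (n : ℂ) + 1 := by push_cast; ring
  rw [← hcast]
  rw [add_assoc] at hzero
  have hA := eq_neg_of_add_eq_zero_left hzero
  rw [hA, mul_sub, mul_neg, mul_smul_comm]
  abel

lemma part1 (W : ℕ → ℤ → Mat N) (hW : ∀ lam, IsWeight (W lam))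
    (K2 K1 K0 J1 J0 : ℕ → Mat N)
    (h1 : ∀ lam : ℕ, ∀ x : ℤ,
      W (lam + 1) x = W lam x * ((x : ℂ) ^ 2 • K2 lam + (x : ℂ) • K1 lam + K0 lam))
    (h2 : ∀ lam : ℕ, ∀ x : ℤ,
      W (lam + 1) x - W (lam + 1) (x - 1) = W lam x * ((x : ℂ) • J1 lam + J0 lam))
    (P : ℕ → ℕ → Polynomial (Mat N)) (hP : ∀ lam, IsMOS (W lam) (P lam))
    (n lam : ℕ) :
    ((n : ℂ) + 1) • innerW (W (lam + 1)) (P (lam + 1) n) (P (lam + 1) n)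
      = innerW (W lam) (P lam (n + 1)) (P lam (n + 1))
          * (-((n : ℂ) • K2 lam) - J1 lam) := by
  rcases n with _ | m
  · apply part1_core W hW K2 J1 J0 h2 P hP 0 lam
    have hdQ : (P (lam + 1) 0).natDegree = 0 := (hP (lam + 1)).deg 0
    have hQC : P (lam + 1) 0 = C ((P (lam + 1) 0).coeff 0) :=
      (P (lam + 1) 0).eq_C_of_natDegree_le_zero (le_of_eq hdQ)
    have hs0 : P (lam + 1) 0 - shiftP (-1) (P (lam + 1) 0) = (0 : Polynomial (Mat N)) := by
      conv_lhs => rw [hQC]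
      rw [shiftP_C, sub_self]
    rw [hs0, innerW_zero_right]
    simp
  · apply part1_core W hW K2 J1 J0 h2 P hP (m + 1) lam
    have hWl := hW lam
    set p := P lam (m + 2) with hpdef
    set Q := P (lam + 1) (m + 1) with hQdef
    set q : Polynomial (Mat N) := shiftP (-1) Q with hqdef
    have hdQ : Q.natDegree = m + 1 := (hP (lam + 1)).deg (m + 1)
    have hQtop : Q.coeff (m + 1) = 1 := by
      have h := ((hP (lam + 1)).monic (m + 1)).coeff_natDegree; rwa [hdQ] at h
    have hQ2 : Q.coeff (m + 1 + 1) = 0 := coeff_eq_zero_of_natDegree_lt (by omega)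
    have hqtop : q.coeff (m + 1) = 1 := by
      rw [hqdef, coeff_shiftP (-1) Q (m + 1) (by omega), hQ2, smul_zero, add_zero, hQtop]
    have hqdeg : q.natDegree ≤ m + 1 := (natDegree_shiftP_le _ _).trans (le_of_eq hdQ)
    set s : Polynomial (Mat N) := Q - q with hsdef
    have hsm : s.coeff m = ((m + 1 : ℕ) : ℂ) • (1 : Mat N) := by
      rw [hsdef, coeff_sub, hqdef, coeff_shiftP (-1) Q m (by omega), hQtop,
        sub_add_cancel_left, neg_one_mul, neg_smul, neg_neg]
    have hsdeg : s.natDegree ≤ m := by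
      rw [natDegree_le_iff_coeff_eq_zero]
      intro j hj
      rw [hsdef, coeff_sub]
      rcases eq_or_lt_of_le (Nat.succ_le_of_lt hj) with hje | hjl
      · rw [← hje, hQtop, hqtop, sub_self]
      · have e1 : Q.coeff j = 0 := coeff_eq_zero_of_natDegree_lt (by omega)
        have e2 : q.coeff j = 0 := coeff_eq_zero_of_natDegree_lt (by omega)
        rw [e1, e2, sub_zero]
    have hco := coeff_mul_quadratic s (K2 lam)ᴴ (K1 lam)ᴴ (K0 lam)ᴴ m hsdeg
    have hconv := innerW_convert (K2 lam) (K1 lam) (K0 lam) (h1 lam) p s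
    rw [hconv]
    rw [innerW_right_of_deg_le hWl (hP lam) (m + 2) _ hco.2, hco.1, hsm]
    rw [smul_mul_assoc, one_mul, Matrix.conjTranspose_smul,
      Matrix.conjTranspose_conjTranspose, star_natCast, mul_smul_comm]

end Aux

/-- relations between squared norms of the shifted families, invertibility
of the matrices `G_n^{(λ)}`, and the resulting formula for the norms. -/
theorem squared_norms_relation {N : ℕ} (W : ℕ → ℤ → Mat N)
    (hW : ∀ lam, IsWeight (W lam))
    (K2 K1 K0 J1 J0 : ℕ → Mat N)
    (h1 : ∀ lam : ℕ, ∀ x : ℤ,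
      W (lam + 1) x = W lam x * ((x : ℂ) ^ 2 • K2 lam + (x : ℂ) • K1 lam + K0 lam))
    (h2 : ∀ lam : ℕ, ∀ x : ℤ,
      W (lam + 1) x - W (lam + 1) (x - 1) = W lam x * ((x : ℂ) • J1 lam + J0 lam))
    (P : ℕ → ℕ → Polynomial (Mat N)) (hP : ∀ lam, IsMOS (W lam) (P lam))
    (H : ℕ → ℕ → Mat N)
    (hH : ∀ lam n, H lam n = innerW (W lam) (P lam n) (P lam n))
    (G : ℕ → ℕ → Mat N)
    (hG : ∀ n lam, G n lam = -(((n : ℂ) - 1) • (K2 lam)ᴴ) - (J1 lam)ᴴ) :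
    (∀ n lam : ℕ, ((n : ℂ) + 1) • H (lam + 1) n = H lam (n + 1) * (G (n + 1) lam)ᴴ) ∧
    (∀ n lam : ℕ, 1 ≤ n → IsUnit (G n lam)) ∧
    (∀ n lam : ℕ,
      H lam n * ((List.range n).map fun i => (G (n - i) (lam + i))ᴴ).prod
        = (n.factorial : ℂ) • H (lam + n) 0) := by
  have key1 : ∀ n lam : ℕ, ((n : ℂ) + 1) • H (lam + 1) n
      = H lam (n + 1) * (G (n + 1) lam)ᴴ := by
    intro n lam
    have hGH : (G (n + 1) lam)ᴴ = -((n : ℂ) • K2 lam) - J1 lam := by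
      rw [hG]
      have hc : (((n + 1 : ℕ)) : ℂ) - 1 = (n : ℂ) := by push_cast; ring
      rw [hc, conjTranspose_sub, conjTranspose_neg, Matrix.conjTranspose_smul,
        Matrix.conjTranspose_conjTranspose, Matrix.conjTranspose_conjTranspose,
        star_natCast]
    rw [hGH, hH, hH]
    exact part1 W hW K2 K1 K0 J1 J0 h1 h2 P hP n lam
  have key2 : ∀ n lam : ℕ, 1 ≤ n → IsUnit (G n lam) := by
    intro n lam hn
    obtain ⟨m, rfl⟩ : ∃ m, n = m + 1 := ⟨n - 1, by omega⟩
    have hHu : IsUnit (H lam (m + 1)).det := by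
      rw [hH]
      exact (Matrix.isUnit_iff_isUnit_det _).1 (isUnit_innerW_self (hW lam) (hP lam) (m + 1))
    have hH'u : IsUnit (H (lam + 1) m).det := by
      rw [hH]
      exact (Matrix.isUnit_iff_isUnit_det _).1 (isUnit_innerW_self (hW (lam + 1)) (hP (lam + 1)) m)
    have e := congrArg Matrix.det (key1 m lam)
    rw [Matrix.det_smul, Matrix.det_mul, Matrix.det_conjTranspose] at e
    have hne : ((m : ℂ) + 1) ^ Fintype.card (Fin N) * (H (lam + 1) m).det ≠ 0 :=
      mul_ne_zero (pow_ne_zero _ (by exact_mod_cast Nat.succ_ne_zero m))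
        hH'u.ne_zero
    rw [e] at hne
    have hGdet : (G (m + 1) lam).det ≠ 0 := by
      have hstar : star (G (m + 1) lam).det ≠ 0 := (mul_ne_zero_iff.1 hne).2
      intro h0
      rw [h0, star_zero] at hstar
      exact hstar rfl
    exact (Matrix.isUnit_iff_isUnit_det _).2 (isUnit_iff_ne_zero.2 hGdet)
  refine ⟨key1, key2, ?_⟩
  intro n
  induction n with
  | zero =>
      intro lam
      simp [Nat.factorial]
  | succ n ih =>
      intro lam
      rw [List.range_succ_eq_map, List.map_cons, List.prod_cons, List.map_map]
      have hmap : (List.range n).map ((fun i => (G (n + 1 - i) (lam + i))ᴴ) ∘ Nat.succ)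
          = (List.range n).map (fun i => (G (n - i) ((lam + 1) + i))ᴴ) := by
        apply List.map_congr_left
        intro i _
        show (G (n + 1 - (i + 1)) (lam + (i + 1)))ᴴ = (G (n - i) ((lam + 1) + i))ᴴ
        rw [Nat.succ_sub_succ, show lam + (i + 1) = (lam + 1) + i by omega]
      rw [hmap]
      simp only [Nat.sub_zero, Nat.add_zero]
      rw [← mul_assoc, ← key1 n lam, smul_mul_assoc,
        ih (lam + 1), smul_smul, show (lam + 1) + n = lam + (n + 1) by omega]
      congr 1
      rw [Nat.factorial_succ]
      push_cast
      ring
end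
end

section
/- Let W be an N×N discrete matrix weight with monic orthogonal sequence (P_n), and assume P_n(0) is invertible for every n ∈ ℕ₀. Let F_1, F_0, F_{−1} : ℂ → M_N(ℂ) be functions with F_1(x) invertible for all x ∈ ℕ₀ and F_{−1}(0) = 0, and let Λ : ℕ₀ → M_N(ℂ) satisfy the eigenvalue equations P_n(x+1)F_1(x) + P_n(x)F_0(x) + P_n(x−1)F_{−1}(x) = Λ_n·P_n(x) for all n ∈ ℕ₀ and all x ∈ ℂ. Assume ρ(n) := P_n(0)^{−1}Λ_n P_n(0) satisfies the block Vandermonde condition. Set Υ(0) = I and Υ(x) = F_1(0)^{−1}F_1(1)^{−1}⋯F_1(x−1)^{−1} for x ≥ 1. Then there exists a unique sequence (Q_x)_{x≥0} of monic matrix polynomials with deg Q_x = x such that P_n(x) = P_n(0)·Q_x⟦ρ(n)⟧·Υ(x) for all n, x ∈ ℕ₀. Moreover this sequence satisfies, for all n ∈ ℕ₀ and all x ≥ 1, ρ(n)·Q_x⟦ρ(n)⟧ = Q_{x+1}⟦ρ(n)⟧ + Q_x⟦ρ(n)⟧·𝒴_x + Q_{x−1}⟦ρ(n)⟧·𝒵_x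 with 𝒴_x = Υ(x)F_0(x)Υ(x)^{−1} and 𝒵_x = Υ(x−1)F_{−1}(x)Υ(x)^{−1}, and ρ(n) = Q_1⟦ρ(n)⟧ + F_0(0) for all n. -/
open scoped BigOperators ComplexOrder
open Matrix Polynomial Filter

noncomputable section

/-- The matrix function `Υ(x) = F₁(0)⁻¹ F₁(1)⁻¹ ⋯ F₁(x-1)⁻¹`, with `Υ(0) = I`. -/
def Ups {N : ℕ} (F1 : ℂ → Mat N) : ℕ → Mat N
  | 0 => 1
  | (x + 1) => Ups F1 x * (F1 (x : ℂ))⁻¹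
section Aux

variable {N : ℕ}

lemma leftEval_C (A M : Mat N) : leftEval (Polynomial.C A) M = A := by
  unfold leftEval
  rw [Polynomial.sum_C_index (by simp)]
  simp

lemma leftEval_X (M : Mat N) : leftEval Polynomial.X M = M := by
  unfold leftEval
  rw [Polynomial.sum_X_index (by simp)]
  simp

lemma leftEval_one (M : Mat N) : leftEval 1 M = 1 := by
  rw [← Polynomial.C_1]; simpa using leftEval_C (1 : Mat N) M

lemma leftEval_zero (M : Mat N) : leftEval (0 : Polynomial (Mat N)) M = 0 :=
  Polynomial.sum_zero_index _

lemma leftEval_add (p q : Polynomial (Mat N)) (M : Mat N) :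
    leftEval (p + q) M = leftEval p M + leftEval q M :=
  Polynomial.sum_add_index p q _ (fun _ => by simp) (fun _ b c => by rw [mul_add])

lemma leftEval_neg (p : Polynomial (Mat N)) (M : Mat N) :
    leftEval (-p) M = - leftEval p M := by
  have h := leftEval_add p (-p) M
  rw [add_neg_cancel, leftEval_zero] at h
  exact (neg_eq_of_add_eq_zero_right h.symm).symm

lemma leftEval_sub (p q : Polynomial (Mat N)) (M : Mat N) :
    leftEval (p - q) M = leftEval p M - leftEval q M := by
  rw [sub_eq_add_neg, leftEval_add, leftEval_neg, sub_eq_add_neg]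

lemma leftEval_range (p : Polynomial (Mat N)) (M : Mat N) {d : ℕ} (hd : p.natDegree < d) :
    leftEval p M = ∑ k ∈ Finset.range d, M ^ k * p.coeff k :=
  Polynomial.sum_over_range' p (fun _ => by simp) d hd

lemma leftEval_X_mul (p : Polynomial (Mat N)) (M : Mat N) :
    leftEval (Polynomial.X * p) M = M * leftEval p M := by
  have hdeg : (Polynomial.X * p).natDegree < p.natDegree + 2 := by
    have h1 : (Polynomial.X * p).natDegree ≤ 1 + p.natDegree :=
      Polynomial.natDegree_mul_le.trans (by
        exact Nat.add_le_add_right Polynomial.natDegree_X_le _)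
    omega
  rw [leftEval_range (Polynomial.X * p) M hdeg,
    leftEval_range p M (Nat.lt_succ_self _), Finset.sum_range_succ']
  simp only [Polynomial.coeff_X_mul, pow_zero, one_mul, Polynomial.mul_coeff_zero,
    Polynomial.coeff_X_zero, zero_mul, add_zero, Finset.mul_sum]
  refine Finset.sum_congr rfl fun k _ => ?_
  rw [pow_succ', mul_assoc]

lemma leftEval_mul_C (p : Polynomial (Mat N)) (A M : Mat N) :
    leftEval (p * Polynomial.C A) M = leftEval p M * A := by
  have hdeg : (p * Polynomial.C A).natDegree < p.natDegree + 1 := by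
    have h1 : (p * Polynomial.C A).natDegree ≤ p.natDegree + 0 :=
      Polynomial.natDegree_mul_le.trans (by
        exact Nat.add_le_add_left (Polynomial.natDegree_C _).le _)
    omega
  rw [leftEval_range (p * Polynomial.C A) M hdeg,
    leftEval_range p M (Nat.lt_succ_self _), Finset.sum_mul]
  refine Finset.sum_congr rfl fun k _ => ?_
  rw [Polynomial.coeff_mul_C, mul_assoc]

lemma vdm_kill {x : ℕ} (σ : Fin (x + 1) → Mat N)
    (hk : IsUnit (Matrix.of fun p q : Fin (x + 1) × Fin N => (σ p.1 ^ (q.1 : ℕ)) p.2 q.2))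
    (D : Polynomial (Mat N)) (hD : D.natDegree ≤ x)
    (h0 : ∀ i, leftEval D (σ i) = 0) : D = 0 := by
  set V : Matrix (Fin (x + 1) × Fin N) (Fin (x + 1) × Fin N) ℂ :=
    Matrix.of fun p q : Fin (x + 1) × Fin N => (σ p.1 ^ (q.1 : ℕ)) p.2 q.2 with hV
  set B : Matrix (Fin (x + 1) × Fin N) (Fin N) ℂ :=
    fun q c => (D.coeff (q.1 : ℕ)) q.2 c with hB
  have hVB : V * B = 0 := by
    ext ⟨p, i⟩ c
    have h := h0 p
    rw [leftEval_range D (σ p) (Nat.lt_succ_of_le hD)] at h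
    have h2 := congrFun (congrFun h i) c
    simp only [Matrix.sum_apply, Matrix.zero_apply] at h2
    rw [← Fin.sum_univ_eq_sum_range (fun k => (σ p ^ k * D.coeff k) i c) (x + 1)] at h2
    simp only [Matrix.mul_apply] at h2
    simp only [Matrix.mul_apply, Matrix.zero_apply, Fintype.sum_prod_type]
    exact h2
  have hB0 : B = 0 := by
    obtain ⟨u, hu⟩ := hk
    have h1 : (↑u⁻¹ : Matrix (Fin (x + 1) × Fin N) (Fin (x + 1) × Fin N) ℂ) * (V * B) = B := by
      rw [← Matrix.mul_assoc, ← hu, Units.inv_mul, Matrix.one_mul]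
    rw [hVB, Matrix.mul_zero] at h1
    exact h1.symm
  apply Polynomial.ext
  intro m
  rcases le_or_gt m x with hm | hm
  · rw [Polynomial.coeff_zero]
    ext i c
    have := congrFun (congrFun hB0 (⟨m, Nat.lt_succ_of_le hm⟩, i)) c
    simpa [hB] using this
  · rw [Polynomial.coeff_eq_zero_of_natDegree_lt (lt_of_le_of_lt hD hm),
      Polynomial.coeff_zero]

lemma monic_sub_small {R : Type*} [Ring R] {p q : Polynomial R} {d : ℕ}
    (hp : p.Monic) (hpd : p.degree = (d : WithBot ℕ))
    (hq : q.degree < (d : WithBot ℕ)) :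
    (p - q).Monic ∧ (p - q).degree = (d : WithBot ℕ) := by
  have h : q.degree < p.degree := hpd ▸ hq
  exact ⟨hp.sub_of_left h, by rw [Polynomial.degree_sub_eq_left_of_degree_lt h, hpd]⟩

lemma degree_mul_C_lt {R : Type*} [Ring R] {q : Polynomial R} {d e : ℕ}
    (hq : q.natDegree ≤ d) (hde : d < e) (A : R) :
    (q * Polynomial.C A).degree < (e : WithBot ℕ) := by
  refine lt_of_le_of_lt (Polynomial.degree_mul_le q (Polynomial.C A)) ?_
  calc q.degree + (Polynomial.C A).degree ≤ q.degree + 0 :=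
        add_le_add le_rfl Polynomial.degree_C_le
    _ = q.degree := add_zero _
    _ ≤ (q.natDegree : WithBot ℕ) := Polynomial.degree_le_natDegree
    _ < (e : WithBot ℕ) := by exact_mod_cast lt_of_le_of_lt hq hde

/-- The candidate dual polynomials. -/
def Qcand {N : ℕ} (F1 F0 Fm1 : ℂ → Mat N) : ℕ → Polynomial (Mat N)
  | 0 => 1
  | 1 => Polynomial.X - Polynomial.C (F0 0)
  | (x + 2) =>
      Polynomial.X * Qcand F1 F0 Fm1 (x + 1)
        - Qcand F1 F0 Fm1 (x + 1) *
            Polynomial.C (Ups F1 (x + 1) * F0 ((x + 1 : ℕ) : ℂ) * (Ups F1 (x + 1))⁻¹)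
        - Qcand F1 F0 Fm1 x *
            Polynomial.C (Ups F1 x * Fm1 ((x + 1 : ℕ) : ℂ) * (Ups F1 (x + 1))⁻¹)

lemma Qcand_monic {N : ℕ} [Nontrivial (Mat N)] (F1 F0 Fm1 : ℂ → Mat N) (x : ℕ) :
    (Qcand F1 F0 Fm1 x).Monic ∧ (Qcand F1 F0 Fm1 x).natDegree = x := by
  suffices h : ∀ y : ℕ, ((Qcand F1 F0 Fm1 y).Monic ∧ (Qcand F1 F0 Fm1 y).natDegree = y) ∧
      ((Qcand F1 F0 Fm1 (y + 1)).Monic ∧ (Qcand F1 F0 Fm1 (y + 1)).natDegree = y + 1) by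
    exact (h x).1
  intro y
  induction y with
  | zero =>
    refine ⟨⟨monic_one, Polynomial.natDegree_one⟩, ?_, ?_⟩
    · exact Polynomial.monic_X_sub_C _
    · exact Polynomial.natDegree_X_sub_C _
  | succ y ih =>
    obtain ⟨⟨h0m, h0d⟩, h1m, h1d⟩ := ih
    refine ⟨⟨h1m, h1d⟩, ?_⟩
    have h1deg : (Qcand F1 F0 Fm1 (y + 1)).degree = ((y + 1 : ℕ) : WithBot ℕ) := by
      rw [Polynomial.degree_eq_natDegree h1m.ne_zero, h1d]
    have hpm : (Polynomial.X * Qcand F1 F0 Fm1 (y + 1)).Monic :=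
      Polynomial.monic_X.mul h1m
    have hpd : (Polynomial.X * Qcand F1 F0 Fm1 (y + 1)).degree = ((y + 2 : ℕ) : WithBot ℕ) := by
      rw [h1m.degree_mul, Polynomial.degree_X, h1deg]
      norm_cast
      omega
    have hstep1 := monic_sub_small hpm hpd
      (degree_mul_C_lt h1d.le (Nat.lt_succ_self _)
        (Ups F1 (y + 1) * F0 ((y + 1 : ℕ) : ℂ) * (Ups F1 (y + 1))⁻¹))
    have hstep2 := monic_sub_small hstep1.1 hstep1.2
      (degree_mul_C_lt (h0d.le.trans (Nat.le_succ _)) (Nat.lt_succ_self _)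
        (Ups F1 y * Fm1 ((y + 1 : ℕ) : ℂ) * (Ups F1 (y + 1))⁻¹))
    exact ⟨hstep2.1, by
      have := hstep2.2
      simpa [Qcand] using Polynomial.natDegree_eq_of_degree_eq_some this⟩

end Aux
/-- every second order difference operator in `𝓑²_R(P)` determines a
unique family of dual polynomials, which moreover satisfies the dual three term
recurrence relation. -/
theorem dual_family_from_operator {N : ℕ} (W : ℤ → Mat N) (hW : IsWeight W)
    (P : ℕ → Polynomial (Mat N)) (hP : IsMOS W P)
    (hP0 : ∀ n, IsUnit (matEval (P n) 0))
    (F1 F0 Fm1 : ℂ → Mat N)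
    (hF1 : ∀ x : ℕ, IsUnit (F1 (x : ℂ)))
    (hFm1 : Fm1 0 = 0)
    (Λ : ℕ → Mat N)
    (heig : ∀ n : ℕ, ∀ z : ℂ,
      matEval (P n) (z + 1) * F1 z + matEval (P n) z * F0 z
          + matEval (P n) (z - 1) * Fm1 z
        = Λ n * matEval (P n) z)
    (ρ : ℕ → Mat N)
    (hρdef : ∀ n, ρ n = (matEval (P n) 0)⁻¹ * Λ n * matEval (P n) 0)
    (hρ : BlockVdm ρ) :
    (∃! Q : ℕ → Polynomial (Mat N),
      (∀ x, (Q x).Monic ∧ (Q x).natDegree = x) ∧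
      (∀ n x : ℕ, matEval (P n) (x : ℂ)
        = matEval (P n) 0 * leftEval (Q x) (ρ n) * Ups F1 x)) ∧
    (∀ Q : ℕ → Polynomial (Mat N),
      ((∀ x, (Q x).Monic ∧ (Q x).natDegree = x) ∧
       (∀ n x : ℕ, matEval (P n) (x : ℂ)
          = matEval (P n) 0 * leftEval (Q x) (ρ n) * Ups F1 x)) →
      ((∀ n : ℕ, ∀ x : ℕ, 1 ≤ x →
          ρ n * leftEval (Q x) (ρ n)
            = leftEval (Q (x + 1)) (ρ n)
                + leftEval (Q x) (ρ n) * (Ups F1 x * F0 (x : ℂ) * (Ups F1 x)⁻¹)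
                + leftEval (Q (x - 1)) (ρ n)
                    * (Ups F1 (x - 1) * Fm1 (x : ℂ) * (Ups F1 x)⁻¹)) ∧
       (∀ n : ℕ, ρ n = leftEval (Q 1) (ρ n) + F0 0))) := by
  -- dispose of the degenerate case N = 0
  rcases Nat.eq_zero_or_pos N with hN | hN
  · exfalso
    subst hN
    have hsub : Subsingleton (Mat 0) := by infer_instance
    have : (P 1) = 0 := Subsingleton.elim _ _
    have hd := hP.deg 1
    rw [this] at hd
    simp at hd
  haveI : Nontrivial (Mat N) := by
    refine ⟨1, 0, fun h => one_ne_zero (α := ℂ) ?_⟩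
    have := congrFun (congrFun h ⟨0, hN⟩) ⟨0, hN⟩
    simp at this
  -- basic invertibility facts
  have hdet : ∀ A : Mat N, IsUnit A → IsUnit A.det := fun A hA =>
    (Matrix.isUnit_iff_isUnit_det A).mp hA
  have hF1inv : ∀ x : ℕ, F1 (x : ℂ) * (F1 (x : ℂ))⁻¹ = 1 := fun x =>
    Matrix.mul_nonsing_inv _ (hdet _ (hF1 x))
  have hF1inv' : ∀ x : ℕ, (F1 (x : ℂ))⁻¹ * F1 (x : ℂ) = 1 := fun x =>
    Matrix.nonsing_inv_mul _ (hdet _ (hF1 x))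
  have hUps : ∀ x : ℕ, IsUnit (Ups F1 x) := by
    intro x
    induction x with
    | zero => exact isUnit_one
    | succ x ih =>
      exact ih.mul (Matrix.isUnit_nonsing_inv_iff.mpr (hF1 x))
  have hUinv : ∀ x : ℕ, (Ups F1 x)⁻¹ * Ups F1 x = 1 := fun x =>
    Matrix.nonsing_inv_mul _ (hdet _ (hUps x))
  have hP0inv : ∀ n, matEval (P n) 0 * (matEval (P n) 0)⁻¹ = 1 := fun n =>
    Matrix.mul_nonsing_inv _ (hdet _ (hP0 n))
  have key : ∀ n, Λ n * matEval (P n) 0 = matEval (P n) 0 * ρ n := by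
    intro n
    rw [hρdef n, ← mul_assoc, ← mul_assoc, hP0inv n, one_mul]
  have key' : ∀ n (A : Mat N), Λ n * (matEval (P n) 0 * A) = matEval (P n) 0 * (ρ n * A) := by
    intro n A
    rw [← mul_assoc, key n, mul_assoc]
  -- the fundamental identity, proved for the candidate dual family
  have main : ∀ x : ℕ, ∀ n, matEval (P n) (x : ℂ)
      = matEval (P n) 0 * leftEval (Qcand F1 F0 Fm1 x) (ρ n) * Ups F1 x := by
    have base0 : ∀ n, matEval (P n) ((0 : ℕ) : ℂ)
        = matEval (P n) 0 * leftEval (Qcand F1 F0 Fm1 0) (ρ n) * Ups F1 0 := by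
      intro n
      show matEval (P n) ((0 : ℕ) : ℂ)
        = matEval (P n) 0 * leftEval (1 : Polynomial (Mat N)) (ρ n) * Ups F1 0
      rw [leftEval_one]
      simp [Ups]
    have base1 : ∀ n, matEval (P n) ((1 : ℕ) : ℂ)
        = matEval (P n) 0 * leftEval (Qcand F1 F0 Fm1 1) (ρ n) * Ups F1 1 := by
      intro n
      have h := heig n 0
      rw [hFm1, mul_zero, add_zero] at h
      have h1 : matEval (P n) ((1 : ℕ) : ℂ) * F1 0
          = Λ n * matEval (P n) 0 - matEval (P n) 0 * F0 0 := by
        rw [show ((1 : ℕ) : ℂ) = (0 : ℂ) + 1 by norm_num]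
        exact eq_sub_of_add_eq h
      show matEval (P n) ((1 : ℕ) : ℂ)
        = matEval (P n) 0 * leftEval (Polynomial.X - Polynomial.C (F0 0)) (ρ n) * Ups F1 1
      rw [leftEval_sub, leftEval_X, leftEval_C]
      have hU1 : Ups F1 1 = (F1 0)⁻¹ := by
        show Ups F1 0 * (F1 ((0 : ℕ) : ℂ))⁻¹ = (F1 0)⁻¹
        norm_num [Ups]
      rw [hU1]
      have h2 : matEval (P n) 0 * (ρ n - F0 0) = matEval (P n) ((1 : ℕ) : ℂ) * F1 0 := by
        rw [mul_sub, ← key n, h1]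
      rw [h2, mul_assoc]
      have : F1 0 * (F1 0)⁻¹ = 1 := by
        have := hF1inv 0; norm_num at this; exact this
      rw [this, mul_one]
    have step : ∀ x : ℕ,
        (∀ n, matEval (P n) ((x : ℕ) : ℂ)
          = matEval (P n) 0 * leftEval (Qcand F1 F0 Fm1 x) (ρ n) * Ups F1 x) →
        (∀ n, matEval (P n) ((x + 1 : ℕ) : ℂ)
          = matEval (P n) 0 * leftEval (Qcand F1 F0 Fm1 (x + 1)) (ρ n) * Ups F1 (x + 1)) →
        (∀ n, matEval (P n) ((x + 2 : ℕ) : ℂ)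
          = matEval (P n) 0 * leftEval (Qcand F1 F0 Fm1 (x + 2)) (ρ n) * Ups F1 (x + 2)) := by
      intro x ih0 ih1 n
      have h := heig n ((x + 1 : ℕ) : ℂ)
      rw [show ((x + 1 : ℕ) : ℂ) + 1 = ((x + 2 : ℕ) : ℂ) by push_cast; ring,
        show ((x + 1 : ℕ) : ℂ) - 1 = ((x : ℕ) : ℂ) by push_cast; ring] at h
      have hE2 : matEval (P n) ((x + 2 : ℕ) : ℂ) * F1 ((x + 1 : ℕ) : ℂ)
          = Λ n * matEval (P n) ((x + 1 : ℕ) : ℂ)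
            - matEval (P n) ((x + 1 : ℕ) : ℂ) * F0 ((x + 1 : ℕ) : ℂ)
            - matEval (P n) ((x : ℕ) : ℂ) * Fm1 ((x + 1 : ℕ) : ℂ) := by
        rw [eq_sub_of_add_eq (eq_sub_of_add_eq h), sub_right_comm]
      have hE2' : matEval (P n) ((x + 2 : ℕ) : ℂ)
          = (Λ n * matEval (P n) ((x + 1 : ℕ) : ℂ)
            - matEval (P n) ((x + 1 : ℕ) : ℂ) * F0 ((x + 1 : ℕ) : ℂ)
            - matEval (P n) ((x : ℕ) : ℂ) * Fm1 ((x + 1 : ℕ) : ℂ)) * (F1 ((x + 1 : ℕ) : ℂ))⁻¹ := by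
        rw [← hE2, mul_assoc, hF1inv (x + 1), mul_one]
      rw [ih0 n, ih1 n] at hE2'
      rw [hE2']
      have hQ2 : Qcand F1 F0 Fm1 (x + 2)
          = Polynomial.X * Qcand F1 F0 Fm1 (x + 1)
            - Qcand F1 F0 Fm1 (x + 1) *
                Polynomial.C (Ups F1 (x + 1) * F0 ((x + 1 : ℕ) : ℂ) * (Ups F1 (x + 1))⁻¹)
            - Qcand F1 F0 Fm1 x *
                Polynomial.C (Ups F1 x * Fm1 ((x + 1 : ℕ) : ℂ) * (Ups F1 (x + 1))⁻¹) := rfl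
      have hU2 : Ups F1 (x + 2) = Ups F1 (x + 1) * (F1 ((x + 1 : ℕ) : ℂ))⁻¹ := rfl
      rw [hQ2, hU2, leftEval_sub, leftEval_sub, leftEval_X_mul, leftEval_mul_C, leftEval_mul_C]
      have hU1 : ∀ A : Mat N, (Ups F1 (x + 1))⁻¹ * (Ups F1 (x + 1) * A) = A := fun A => by
        rw [← mul_assoc, hUinv (x + 1), one_mul]
      simp only [sub_mul, mul_sub, mul_assoc, key' n, hU1]
    intro x
    suffices h : (∀ n, matEval (P n) ((x : ℕ) : ℂ)
        = matEval (P n) 0 * leftEval (Qcand F1 F0 Fm1 x) (ρ n) * Ups F1 x) ∧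
        (∀ n, matEval (P n) ((x + 1 : ℕ) : ℂ)
          = matEval (P n) 0 * leftEval (Qcand F1 F0 Fm1 (x + 1)) (ρ n) * Ups F1 (x + 1)) by
      exact h.1
    induction x with
    | zero => exact ⟨base0, base1⟩
    | succ x ih => exact ⟨ih.2, step x ih.1 ih.2⟩
  -- uniqueness of the dual family
  have uniq : ∀ Q : ℕ → Polynomial (Mat N),
      ((∀ x, (Q x).Monic ∧ (Q x).natDegree = x) ∧
       (∀ n x : ℕ, matEval (P n) (x : ℂ)
          = matEval (P n) 0 * leftEval (Q x) (ρ n) * Ups F1 x)) →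
      Q = Qcand F1 F0 Fm1 := by
    intro Q hQ
    funext x
    have hagree : ∀ n, leftEval (Q x) (ρ n) = leftEval (Qcand F1 F0 Fm1 x) (ρ n) := by
      intro n
      have h1 := (hQ.2 n x).symm.trans (main x n)
      exact (hP0 n).mul_left_cancel ((hUps x).mul_right_cancel h1)
    obtain ⟨k, hk⟩ := hρ x
    have hsub : Q x - Qcand F1 F0 Fm1 x = 0 := by
      refine vdm_kill (fun i => ρ (k i)) hk _ ?_ ?_
      · refine (Polynomial.natDegree_sub_le _ _).trans ?_
        rw [(hQ.1 x).2, (Qcand_monic F1 F0 Fm1 x).2]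
        omega
      · intro i
        rw [leftEval_sub, hagree (k i), sub_self]
    exact sub_eq_zero.mp hsub
  constructor
  · exact ⟨Qcand F1 F0 Fm1, ⟨fun x => Qcand_monic F1 F0 Fm1 x, fun n x => main x n⟩, uniq⟩
  -- the dual three term recurrence
  intro Q hQ
  constructor
  · intro n x hx
    rcases x with _ | y
    · omega
    simp only [Nat.add_sub_cancel]
    refine (hP0 n).mul_left_cancel ((hUps (y + 1)).mul_right_cancel ?_)
    have h := heig n ((y + 1 : ℕ) : ℂ)
    rw [show ((y + 1 : ℕ) : ℂ) + 1 = ((y + 2 : ℕ) : ℂ) by push_cast; ring,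
      show ((y + 1 : ℕ) : ℂ) - 1 = ((y : ℕ) : ℂ) by push_cast; ring] at h
    have hU1 : ∀ A : Mat N, (Ups F1 (y + 1))⁻¹ * (Ups F1 (y + 1) * A) = A := fun A => by
      rw [← mul_assoc, hUinv (y + 1), one_mul]
    calc matEval (P n) 0 * (ρ n * leftEval (Q (y + 1)) (ρ n)) * Ups F1 (y + 1)
        = Λ n * matEval (P n) ((y + 1 : ℕ) : ℂ) := by
          rw [hQ.2 n (y + 1)]
          simp only [mul_assoc, key' n]
      _ = matEval (P n) ((y + 2 : ℕ) : ℂ) * F1 ((y + 1 : ℕ) : ℂ)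
            + matEval (P n) ((y + 1 : ℕ) : ℂ) * F0 ((y + 1 : ℕ) : ℂ)
            + matEval (P n) ((y : ℕ) : ℂ) * Fm1 ((y + 1 : ℕ) : ℂ) := h.symm
      _ = matEval (P n) 0 * (leftEval (Q (y + 1 + 1)) (ρ n)
              + leftEval (Q (y + 1)) (ρ n)
                  * (Ups F1 (y + 1) * F0 ((y + 1 : ℕ) : ℂ) * (Ups F1 (y + 1))⁻¹)
              + leftEval (Q y) (ρ n)
                  * (Ups F1 y * Fm1 ((y + 1 : ℕ) : ℂ) * (Ups F1 (y + 1))⁻¹))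
            * Ups F1 (y + 1) := by
          rw [hQ.2 n (y + 2), hQ.2 n (y + 1), hQ.2 n y,
            show Ups F1 (y + 2) = Ups F1 (y + 1) * (F1 ((y + 1 : ℕ) : ℂ))⁻¹ from rfl,
            show (y + 1 + 1) = (y + 2) from rfl]
          simp only [mul_add, add_mul, mul_assoc, hU1, hF1inv' (y + 1), hUinv (y + 1), mul_one]
  · intro n
    refine (hP0 n).mul_left_cancel ?_
    have h := heig n 0
    rw [hFm1, mul_zero, add_zero] at h
    have hPn1 : matEval (P n) ((1 : ℕ) : ℂ)
        = matEval (P n) 0 * leftEval (Q 1) (ρ n) * Ups F1 1 := hQ.2 n 1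
    have hU1 : Ups F1 1 = (F1 0)⁻¹ := by
      show Ups F1 0 * (F1 ((0 : ℕ) : ℂ))⁻¹ = (F1 0)⁻¹
      norm_num [Ups]
    have hF10 : (F1 0)⁻¹ * F1 0 = 1 := by
      have := hF1inv' 0; norm_num at this; exact this
    have h1 : matEval (P n) 0 * leftEval (Q 1) (ρ n)
        = matEval (P n) (0 + 1 : ℂ) * F1 0 := by
      rw [show ((0 : ℂ) + 1) = ((1 : ℕ) : ℂ) by norm_num, hPn1, hU1,
        mul_assoc, mul_assoc, hF10, mul_one]
    rw [mul_add, h1, h, key n]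
end
end
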